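/- Let u, u', v, v' ∈ ℝ³ be points all of whose coordinates are integer multiples of 4π, such that u' − u and v' − v each equal ±4π times a standard basis vector of ℝ³. If the closed segments [u, u'] and [v, v'] are disjoint, then the distance between the segments [u, u'] and [v, v'] is at least 4π. -/

import Mathlib

open Set Metric Real

noncomputable section

/-- Points of `ℝ³` with the Euclidean norm. -/
abbrev E3 := EuclideanSpace ℝ (Fin 3)

/-- The `i`-th standard basis vector of `ℝ³`. -/
def stdBasis3 (i : Fin 3) : E3 := EuclideanSpace.single i 1

/-- A point of `ℝ³` all of whose coordinates are integer multiples of `4π`. -/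
def IsLatticePoint (u : E3) : Prop := ∀ i : Fin 3, ∃ k : ℤ, u i = 4 * π * k

/-- `u' − u` equals `±4π` times a standard basis vector. -/
def IsLatticeStep (u u' : E3) : Prop :=
  ∃ i : Fin 3, u' - u = (4 * π) • stdBasis3 i ∨ u' - u = -((4 * π) • stdBasis3 i)

lemma coord_le_dist (x y : E3) (k : Fin 3) : |x k - y k| ≤ dist x y := by
  rw [EuclideanSpace.dist_eq]
  have h : dist (x k) (y k) ^ 2 ≤ ∑ i, dist (x i) (y i) ^ 2 :=
    Finset.single_le_sum (f := fun i => dist (x i) (y i) ^ 2)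
      (fun i _ => sq_nonneg _) (Finset.mem_univ k)
  rw [← Real.dist_eq]
  exact (Real.le_sqrt dist_nonneg (Finset.sum_nonneg fun i _ => sq_nonneg _)).mpr h

lemma seg_sub_box {u u' x : E3} (hx : x ∈ segment ℝ u u') (k : Fin 3) :
    x k ∈ Icc (min (u k) (u' k)) (max (u k) (u' k)) := by
  obtain ⟨a, b, ha, hb, hab, rfl⟩ := hx
  have hcoord : (a • u + b • u') k = a * u k + b * u' k := rfl
  rw [hcoord]
  constructor
  · have e : a * (u k ⊓ u' k) + b * (u k ⊓ u' k) = u k ⊓ u' k := by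
      linear_combination (u k ⊓ u' k) * hab
    linarith [mul_le_mul_of_nonneg_left (min_le_left (u k) (u' k)) ha,
      mul_le_mul_of_nonneg_left (min_le_right (u k) (u' k)) hb]
  · have e : a * (u k ⊔ u' k) + b * (u k ⊔ u' k) = u k ⊔ u' k := by
      linear_combination (u k ⊔ u' k) * hab
    linarith [mul_le_mul_of_nonneg_left (le_max_left (u k) (u' k)) ha,
      mul_le_mul_of_nonneg_left (le_max_right (u k) (u' k)) hb]

lemma box_sub_seg {u u' x : E3} (i : Fin 3) (h : ∀ k, k ≠ i → u k = u' k)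
    (hx : ∀ k, x k ∈ Icc (min (u k) (u' k)) (max (u k) (u' k))) :
    x ∈ segment ℝ u u' := by
  have hxi : x i ∈ segment ℝ (u i) (u' i) := by
    rw [segment_eq_uIcc, uIcc]; exact hx i
  obtain ⟨a, b, ha, hb, hab, hxi⟩ := hxi
  refine ⟨a, b, ha, hb, hab, ?_⟩
  refine PiLp.ext fun k => ?_
  by_cases hk : k = i
  · subst hk; exact hxi
  · have h1 := h k hk
    have h2 := hx k
    rw [h1, min_self, max_self, Icc_self, mem_singleton_iff] at h2
    show a * u k + b * u' k = x k
    rw [h2, h1]; ring_nf; linear_combination u' k * hab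

lemma step_coords {u u' : E3} (h : IsLatticeStep u u') :
    ∃ i : Fin 3, ∀ k, k ≠ i → u k = u' k := by
  obtain ⟨i, h | h⟩ := h <;> refine ⟨i, fun k hk => ?_⟩ <;>
  · have := congrFun (congrArg (fun (w : E3) (j : Fin 3) => w j) h) k
    simp only [stdBasis3] at this
    have hs : (EuclideanSpace.single i (1:ℝ)) k = 0 := by
      rw [EuclideanSpace.single_apply]; simp [hk]
    have hsub : (u' - u) k = u' k - u k := rfl
    first
    | (have hsmul : ((4 * π) • EuclideanSpace.single i (1:ℝ)) k
          = (4 * π) * (EuclideanSpace.single i (1:ℝ)) k := rfl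
       rw [hsub, hsmul, hs] at this; linarith)
    | (have hsmul : (-((4 * π) • EuclideanSpace.single i (1:ℝ))) k
          = -((4 * π) * (EuclideanSpace.single i (1:ℝ)) k) := rfl
       rw [hsub, hsmul, hs] at this; linarith)

lemma lattice_gap {a b : ℝ} (hm : ∃ m : ℤ, a = 4 * π * m) (hn : ∃ n : ℤ, b = 4 * π * n)
    (hab : a < b) : a + 4 * π ≤ b := by
  obtain ⟨m, rfl⟩ := hm
  obtain ⟨n, rfl⟩ := hn
  have h4 : (0:ℝ) < 4 * π := by positivity
  have hmn : (m:ℝ) < n := by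
    have := (mul_lt_mul_iff_right₀ h4).mp hab
    exact_mod_cast this
  have h1 : (m:ℝ) + 1 ≤ n := by
    exact_mod_cast Int.add_one_le_iff.mpr (by exact_mod_cast hmn)
  nlinarith

lemma lattice_min {a b : ℝ} (hm : ∃ m : ℤ, a = 4 * π * m) (hn : ∃ n : ℤ, b = 4 * π * n) :
    ∃ p : ℤ, min a b = 4 * π * p := by
  rcases le_total a b with h | h
  · rw [min_eq_left h]; exact hm
  · rw [min_eq_right h]; exact hn

lemma lattice_max {a b : ℝ} (hm : ∃ m : ℤ, a = 4 * π * m) (hn : ∃ n : ℤ, b = 4 * π * n) :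
    ∃ p : ℤ, max a b = 4 * π * p := by
  rcases le_total a b with h | h
  · rw [max_eq_right h]; exact hn
  · rw [max_eq_left h]; exact hm

lemma far_of_gap (u u' v v' : E3) (k : Fin 3)
    (hgap : (u k ⊔ u' k) + 4 * π ≤ v k ⊓ v' k) :
    ∀ x ∈ segment ℝ u u', ∀ y ∈ segment ℝ v v', 4 * π ≤ dist x y := by
  intro x hx y hy
  have h1 := (seg_sub_box hx k).2
  have h2 := (seg_sub_box hy k).1
  have : 4 * π ≤ |x k - y k| := by
    rw [abs_sub_comm, abs_of_nonneg (by nlinarith [pi_pos])]; linarith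
  exact this.trans (coord_le_dist x y k)

/-- if `u, u', v, v' ∈ ℝ³` have all coordinates integer multiples of `4π`,
`u' − u` and `v' − v` each equal `±4π` times a standard basis vector, and the closed
segments `[u, u']` and `[v, v']` are disjoint, then the distance between the two
segments is at least `4π`. -/
theorem lattice_segments_far_apart (u u' v v' : E3)
    (hu : IsLatticePoint u) (hu' : IsLatticePoint u')
    (hv : IsLatticePoint v) (hv' : IsLatticePoint v')
    (hstep₁ : IsLatticeStep u u') (hstep₂ : IsLatticeStep v v')
    (hdisj : Disjoint (segment ℝ u u') (segment ℝ v v')) :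
    ∀ x ∈ segment ℝ u u', ∀ y ∈ segment ℝ v v', 4 * π ≤ dist x y := by
  obtain ⟨i₁, hi₁⟩ := step_coords hstep₁
  obtain ⟨i₂, hi₂⟩ := step_coords hstep₂
  have key : ∃ k : Fin 3, (u k ⊔ u' k) < (v k ⊓ v' k) ∨ (v k ⊔ v' k) < (u k ⊓ u' k) := by
    by_contra hcon
    push_neg at hcon
    set z : E3 := WithLp.toLp 2 (fun k => max (u k ⊓ u' k) (v k ⊓ v' k) : Fin 3 → ℝ) with hz
    have hzk : ∀ k, z k = max (u k ⊓ u' k) (v k ⊓ v' k) := fun k => rfl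
    have hz1 : z ∈ segment ℝ u u' := by
      apply box_sub_seg i₁ hi₁
      intro k
      rw [hzk k]
      exact ⟨le_max_left _ _, max_le (min_le_max) (hcon k).1⟩
    have hz2 : z ∈ segment ℝ v v' := by
      apply box_sub_seg i₂ hi₂
      intro k
      rw [hzk k]
      exact ⟨le_max_right _ _, max_le (hcon k).2 min_le_max⟩
    exact Set.disjoint_left.mp hdisj hz1 hz2
  obtain ⟨k, hlt | hlt⟩ := key
  · exact far_of_gap u u' v v' k
      (lattice_gap (lattice_max (hu k) (hu' k)) (lattice_min (hv k) (hv' k)) hlt)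
  · intro x hx y hy
    rw [dist_comm]
    exact far_of_gap v v' u u' k
      (lattice_gap (lattice_max (hv k) (hv' k)) (lattice_min (hu k) (hu' k)) hlt)
      y hy x hx
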